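/- A finite Abelian group G has the semi-Hajós property if and only if G, regarded as a G-space under the regular action, has the semi-Hajós property as a G-space. -/

import Mathlib

open Pointwise

universe u

/-- `G = AB` is a factorization of the group `G`. -/
def IsFactorization {G : Type u} [Group G] (A B : Set G) : Prop :=
  Function.Bijective (fun p : A × B => (p.1 : G) * (p.2 : G))

/-- `A ⊆ G` is periodic: `gA = A` for some non-identity `g ∈ G`. -/
def IsPeriodic {G : Type u} [Group G] (A : Set G) : Prop :=
  ∃ g : G, g ≠ 1 ∧ g • A = A

/-- An Abelian group `G` has the semi-Hajós property if every complemented proper subset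
`A ⊊ G` either is periodic or has a periodic complementer factor. -/
def SemiHajosGroup (G : Type u) [Group G] : Prop :=
  ∀ A : Set G, A ≠ Set.univ → (∃ B : Set G, IsFactorization A B) →
    (IsPeriodic A ∨ ∃ B : Set G, IsFactorization A B ∧ IsPeriodic B)

/-- `K` is a kaleidoscopical configuration in the group `G` with the regular action. -/
def IsKaleidoscopical {G : Type u} [Group G] (K : Set G) : Prop :=
  ∃ (C : Type u) (χ : G → C), Function.Surjective χ ∧
    ∀ g : G, Set.BijOn χ (g • K) Set.univ

/-- The group `G`, as a `G`-space under the regular action, has the semi-Hajós property: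
for each kaleidoscopical configuration `K ⊊ G` there is a `G`-invariant equivalence
relation `E ≠ Δ_G` such that `K` is `E`-parallel (`K ∩ [x]_E = [x]_E` for `x ∈ K`) or
`E`-orthogonal (`K ∩ [x]_E = {x}` for `x ∈ K`) and `K/E` is kaleidoscopical in the
quotient `G`-space `G/E`. -/
def SemiHajosSpace (G : Type u) [Group G] : Prop :=
  ∀ K : Set G, K ≠ Set.univ → IsKaleidoscopical K →
    ∃ E : Setoid G, E ≠ ⊥ ∧ (∀ g x y : G, E.r x y → E.r (g * x) (g * y)) ∧
      ((∀ x ∈ K, K ∩ {y | E.r x y} = {y | E.r x y}) ∨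
       (∀ x ∈ K, K ∩ {y | E.r x y} = {x})) ∧
      ∃ (C : Type u) (χ : Quotient E → C), Function.Surjective χ ∧
        ∀ g : G, Set.BijOn χ (Quotient.mk E '' (g • K)) Set.univ

section Helpers

variable {G : Type u} [CommGroup G]

lemma SH16.fact_nonempty_right {A B : Set G} (h : IsFactorization A B) : B.Nonempty := by
  obtain ⟨⟨a, b⟩, -⟩ := h.2 1
  exact ⟨b, b.2⟩

lemma SH16.fact_comm {A B : Set G} (h : IsFactorization A B) : IsFactorization B A := by
  constructor
  · rintro ⟨b₁, a₁⟩ ⟨b₂, a₂⟩ hab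
    simp only [Prod.mk.injEq] at *
    have : (fun p : A × B => (p.1 : G) * (p.2 : G)) (a₁, b₁)
        = (fun p : A × B => (p.1 : G) * (p.2 : G)) (a₂, b₂) := by
      simpa [mul_comm] using hab
    have := h.1 this
    simp only [Prod.mk.injEq] at this
    exact ⟨this.2, this.1⟩
  · intro g
    obtain ⟨⟨a, b⟩, hab⟩ := h.2 g
    exact ⟨(b, a), by simpa [mul_comm] using hab⟩

lemma SH16.fact_inj {A B : Set G} (h : IsFactorization A B) {a₁ a₂ : A} {b₁ b₂ : B}
    (hh : (a₁ : G) * b₁ = (a₂ : G) * b₂) : a₁ = a₂ ∧ b₁ = b₂ := by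
  have := h.1 (a₁ := (a₁, b₁)) (a₂ := (a₂, b₂)) hh
  exact ⟨congrArg Prod.fst this, congrArg Prod.snd this⟩

lemma SH16.kal_to_compl {K : Set G} (h : IsKaleidoscopical K) :
    ∃ B : Set G, IsFactorization K⁻¹ B := by
  obtain ⟨C, χ, hs, hb⟩ := h
  refine ⟨χ ⁻¹' {χ 1}, ?_, ?_⟩
  · rintro ⟨⟨x₁, hx₁⟩, ⟨b₁, hb₁⟩⟩ ⟨⟨x₂, hx₂⟩, ⟨b₂, hb₂⟩⟩ heq
    simp only at heq
    simp only [Set.mem_preimage, Set.mem_singleton_iff] at hb₁ hb₂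
    set g := x₁ * b₁ with hg
    have m₁ : b₁ ∈ g • K := by
      refine Set.mem_smul_set.2 ⟨x₁⁻¹, Set.mem_inv.1 hx₁, ?_⟩
      simp only [smul_eq_mul, hg]; rw [mul_comm x₁ b₁, mul_inv_cancel_right]
    have m₂ : b₂ ∈ g • K := by
      refine Set.mem_smul_set.2 ⟨x₂⁻¹, Set.mem_inv.1 hx₂, ?_⟩
      simp only [smul_eq_mul, heq]; rw [mul_comm x₂ b₂, mul_inv_cancel_right]
    have hbb : b₁ = b₂ := (hb g).2.1 m₁ m₂ (hb₁.trans hb₂.symm)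
    subst hbb
    have : x₁ = x₂ := mul_right_cancel (heq : x₁ * b₁ = x₂ * b₁)
    subst this
    rfl
  · intro g
    obtain ⟨z, hz, hχz⟩ := (hb g).2.2 (Set.mem_univ (χ 1))
    obtain ⟨k, hk, rfl⟩ := Set.mem_smul_set.1 hz
    refine ⟨(⟨k⁻¹, Set.mem_inv.2 (by simpa using hk)⟩, ⟨g • k, hχz⟩), ?_⟩
    simp only [smul_eq_mul]
    rw [mul_comm g k, inv_mul_cancel_left]

lemma SH16.compl_to_kal {A B : Set G} (h : IsFactorization A B) : IsKaleidoscopical A⁻¹ := by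
  let e : A × B ≃ G := Equiv.ofBijective _ h
  have he : ∀ p : A × B, (e p : G) = (p.1 : G) * (p.2 : G) := fun p => rfl
  have hsp : ∀ g : G, ((e.symm g).1 : G) * ((e.symm g).2 : G) = g := fun g =>
    (he (e.symm g)).symm.trans (e.apply_symm_apply g)
  refine ⟨A, fun g => (e.symm g).1, ?_, ?_⟩
  · intro a
    obtain ⟨a₀, b₀⟩ : A × B := e.symm 1
    refine ⟨(a : G) * (b₀ : G), ?_⟩
    have : e (a, b₀) = (a : G) * (b₀ : G) := rfl
    simp only [← this, Equiv.symm_apply_apply]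
  · intro g
    refine ⟨fun x _ => Set.mem_univ _, ?_, ?_⟩
    · rintro x hx y hy hxy
      obtain ⟨k₁, hk₁, rfl⟩ := Set.mem_smul_set.1 hx
      obtain ⟨k₂, hk₂, rfl⟩ := Set.mem_smul_set.1 hy
      simp only [smul_eq_mul] at *
      set a₁ := (e.symm (g * k₁)).1 with ha₁
      set a₂ := (e.symm (g * k₂)).1 with ha₂
      set b₁ := (e.symm (g * k₁)).2
      set b₂ := (e.symm (g * k₂)).2
      have ha : (a₁ : G) = (a₂ : G) := by rw [hxy]
      have e₁ : (b₁ : G) = (a₁ : G)⁻¹ * (g * k₁) := eq_inv_mul_iff_mul_eq.mpr (hsp (g * k₁))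
      have e₂ : (b₂ : G) = (a₂ : G)⁻¹ * (g * k₂) := eq_inv_mul_iff_mul_eq.mpr (hsp (g * k₂))
      have key : k₁⁻¹ * (b₁ : G) = k₂⁻¹ * (b₂ : G) := by
        rw [e₁, e₂, ha]
        simp [mul_comm, mul_left_comm, mul_assoc]
      have := (SH16.fact_inj h (a₁ := ⟨k₁⁻¹, Set.mem_inv.1 hk₁⟩)
        (a₂ := ⟨k₂⁻¹, Set.mem_inv.1 hk₂⟩) (b₁ := b₁) (b₂ := b₂) key).1
      have hk : k₁⁻¹ = k₂⁻¹ := congrArg Subtype.val this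
      rw [inv_inj.1 hk]
    · intro a _
      set p := e.symm ((a : G)⁻¹ * g) with hp
      have hdec : ((p.1 : G)) * (p.2 : G) = (a : G)⁻¹ * g := hsp _
      refine ⟨g * (p.1 : G)⁻¹,
        ⟨Set.mem_smul_set.2 ⟨(p.1 : G)⁻¹, Set.mem_inv.2 (by simp), rfl⟩, ?_⟩⟩
      have hx : g * (p.1 : G)⁻¹ = (a : G) * (p.2 : G) := by
        have : g = (a : G) * ((p.1 : G) * (p.2 : G)) := by
          rw [hdec]; simp
        rw [this]
        simp [mul_comm, mul_left_comm, mul_assoc]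
      have : e (a, p.2) = (a : G) * (p.2 : G) := rfl
      simp only [hx, ← this, Equiv.symm_apply_apply]

lemma SH16.smul_set_inv' (a : G) (S : Set G) : (a • S)⁻¹ = a⁻¹ • S⁻¹ := by
  ext x
  simp only [Set.mem_inv, Set.mem_smul_set, smul_eq_mul]
  constructor
  · rintro ⟨s, hs, hx⟩
    have hxe : x = (a * s)⁻¹ := by rw [hx, inv_inv]
    exact ⟨s⁻¹, by simpa using hs, by rw [hxe, mul_inv_rev, mul_comm]⟩
  · rintro ⟨t, ht, rfl⟩
    exact ⟨t⁻¹, by simpa using ht, by simp [mul_comm]⟩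

lemma SH16.image_mk_smul (H : Subgroup G) (g : G) (S : Set G) :
    (QuotientGroup.mk '' (g • S) : Set (G ⧸ H))
      = (QuotientGroup.mk g : G ⧸ H) • (QuotientGroup.mk '' S) := by
  ext q
  simp only [Set.mem_image, Set.mem_smul_set]
  constructor
  · rintro ⟨x, hx, rfl⟩
    obtain ⟨s, hs, rfl⟩ := Set.mem_smul_set.1 hx
    exact ⟨QuotientGroup.mk s, ⟨s, hs, rfl⟩, rfl⟩
  · rintro ⟨p, ⟨s, hs, rfl⟩, rfl⟩
    exact ⟨g * s, Set.mem_smul_set.2 ⟨s, hs, rfl⟩, rfl⟩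

lemma SH16.image_mk_inv (H : Subgroup G) (S : Set G) :
    (QuotientGroup.mk '' S⁻¹ : Set (G ⧸ H)) = (QuotientGroup.mk '' S : Set (G ⧸ H))⁻¹ := by
  ext q
  simp only [Set.mem_image, Set.mem_inv]
  constructor
  · rintro ⟨x, hx, rfl⟩
    exact ⟨x⁻¹, hx, by simp⟩
  · rintro ⟨x, hx, hxq⟩
    exact ⟨x⁻¹, by simpa using hx, by rw [← inv_inv q, ← hxq]; simp⟩

lemma SH16.fact_quotient (H : Subgroup G) {A B : Set G} (h : IsFactorization A B)
    (hB : ∀ s ∈ H, s • B = B) :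
    IsFactorization (QuotientGroup.mk '' A : Set (G ⧸ H)) (QuotientGroup.mk '' B) := by
  constructor
  · rintro ⟨⟨qa₁, a₁, ha₁, rfl⟩, ⟨qb₁, b₁, hb₁, rfl⟩⟩ ⟨⟨qa₂, a₂, ha₂, rfl⟩, ⟨qb₂, b₂, hb₂, rfl⟩⟩ heq
    simp only at heq
    rw [← QuotientGroup.mk_mul, ← QuotientGroup.mk_mul] at heq
    set s := (a₁ * b₁)⁻¹ * (a₂ * b₂) with hsdef
    have hs : s ∈ H := QuotientGroup.eq.1 heq
    have h2 : (a₁ : G) * (s * b₁) = a₂ * b₂ := by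
      rw [mul_comm s b₁, ← mul_assoc, hsdef, mul_inv_cancel_left]
    have hsb : s * b₁ ∈ B := by
      rw [← hB s hs]; exact Set.mem_smul_set.2 ⟨b₁, hb₁, rfl⟩
    obtain ⟨hfa, hfb⟩ := SH16.fact_inj h (a₁ := ⟨a₁, ha₁⟩) (a₂ := ⟨a₂, ha₂⟩)
      (b₁ := ⟨s * b₁, hsb⟩) (b₂ := ⟨b₂, hb₂⟩) h2
    have ea : a₁ = a₂ := congrArg Subtype.val hfa
    have eb' : s * b₁ = b₂ := congrArg Subtype.val hfb
    have eb : (QuotientGroup.mk b₁ : G ⧸ H) = QuotientGroup.mk b₂ := by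
      rw [← eb']
      exact (QuotientGroup.eq.2
        (by rw [mul_comm s b₁, mul_inv_rev, mul_assoc, inv_mul_cancel, mul_one];
            exact inv_mem hs)).symm
    exact Prod.ext (Subtype.ext (congrArg QuotientGroup.mk ea)) (Subtype.ext eb)
  · intro q
    obtain ⟨g, rfl⟩ := QuotientGroup.mk_surjective q
    obtain ⟨⟨a, b⟩, hab⟩ := h.2 g
    refine ⟨(⟨QuotientGroup.mk a, a, a.2, rfl⟩, ⟨QuotientGroup.mk b, b, b.2, rfl⟩), ?_⟩
    simp only [← QuotientGroup.mk_mul]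
    exact congrArg _ hab

lemma SH16.inv_ne_univ {K : Set G} (h : K ≠ Set.univ) : K⁻¹ ≠ Set.univ := by
  intro hh
  apply h
  rw [← inv_inv K, hh, Set.inv_univ]

lemma SH16.zpowers_smul {h : G} {S : Set G} (hp : h • S = S) :
    ∀ s ∈ Subgroup.zpowers h, s • S = S := by
  intro s hs
  have hmem : h ∈ MulAction.stabilizer G S := hp
  exact MulAction.mem_stabilizer_iff.1 (Subgroup.zpowers_le.2 hmem hs)

end Helpers

/-- A finite Abelian group `G` has the semi-Hajós property if and only if
`G`, regarded as a `G`-space under the regular action, has the semi-Hajós property as a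
`G`-space. -/
theorem stmt16 (G : Type u) [CommGroup G] [Finite G] :
    SemiHajosGroup G ↔ SemiHajosSpace G := by
  constructor
  · -- group property implies space property
    intro hG K hKu hKal
    obtain ⟨B₀, hB₀⟩ := SH16.kal_to_compl hKal
    rcases hG K⁻¹ (SH16.inv_ne_univ hKu) ⟨B₀, hB₀⟩ with hper | ⟨B, hKB, hperB⟩
    · -- the configuration itself is periodic : parallel case
      obtain ⟨h, hh1, hhK⟩ := hper
      set H := Subgroup.zpowers h with hH
      have hstab : ∀ s ∈ H, s • K⁻¹ = K⁻¹ := SH16.zpowers_smul hhK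
      have hstabK : ∀ s ∈ H, s • K = K := by
        intro s hs
        have h1 : ((s⁻¹ • K⁻¹)⁻¹ : Set G) = (K⁻¹)⁻¹ :=
          congrArg Inv.inv (hstab s⁻¹ (inv_mem hs))
        rw [SH16.smul_set_inv'] at h1
        simpa only [inv_inv] using h1
      refine ⟨QuotientGroup.leftRel H, ?_, ?_, Or.inl ?_, ?_⟩
      · intro hbot
        have hr : (QuotientGroup.leftRel H).r 1 h :=
          QuotientGroup.leftRel_apply.2 (by rw [inv_one, one_mul]; exact Subgroup.mem_zpowers h)
        rw [hbot] at hr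
        exact hh1 hr.symm
      · intro g x y hxy
        have hxy' := QuotientGroup.leftRel_apply.1 hxy
        refine QuotientGroup.leftRel_apply.2 ?_
        rwa [mul_inv_rev, mul_assoc, inv_mul_cancel_left]
      · intro x hx
        refine Set.inter_eq_right.2 ?_
        intro y hy
        have hs : x⁻¹ * y ∈ H := QuotientGroup.leftRel_apply.1 hy
        rw [← hstabK _ hs]
        exact Set.mem_smul_set.2 ⟨x, hx, by rw [smul_eq_mul, mul_comm, mul_inv_cancel_left]⟩
      · have hfq : IsFactorization (QuotientGroup.mk '' B₀ : Set (G ⧸ H))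
            (QuotientGroup.mk '' K⁻¹) :=
          SH16.fact_quotient H (SH16.fact_comm hB₀) hstab
        have hkal : IsKaleidoscopical (QuotientGroup.mk '' K : Set (G ⧸ H)) := by
          have := SH16.compl_to_kal (SH16.fact_comm hfq)
          rwa [← SH16.image_mk_inv, inv_inv] at this
        obtain ⟨C, χ, hχs, hχb⟩ := hkal
        refine ⟨C, χ, hχs, ?_⟩
        intro g
        have hb := hχb (QuotientGroup.mk g)
        rw [← SH16.image_mk_smul] at hb
        exact hb
    · -- a complementer factor is periodic : orthogonal case
      obtain ⟨h, hh1, hhB⟩ := hperB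
      set H := Subgroup.zpowers h with hH
      have hstabB : ∀ s ∈ H, s • B = B := SH16.zpowers_smul hhB
      refine ⟨QuotientGroup.leftRel H, ?_, ?_, Or.inr ?_, ?_⟩
      · intro hbot
        have hr : (QuotientGroup.leftRel H).r 1 h :=
          QuotientGroup.leftRel_apply.2 (by rw [inv_one, one_mul]; exact Subgroup.mem_zpowers h)
        rw [hbot] at hr
        exact hh1 hr.symm
      · intro g x y hxy
        have hxy' := QuotientGroup.leftRel_apply.1 hxy
        refine QuotientGroup.leftRel_apply.2 ?_
        rwa [mul_inv_rev, mul_assoc, inv_mul_cancel_left]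
      · intro x hx
        ext y
        simp only [Set.mem_inter_iff, Set.mem_setOf_eq, Set.mem_singleton_iff]
        constructor
        · rintro ⟨hyK, hr⟩
          have hs : x⁻¹ * y ∈ H := QuotientGroup.leftRel_apply.1 hr
          obtain ⟨b, hbB⟩ := SH16.fact_nonempty_right hKB
          have hsb : (x⁻¹ * y) * b ∈ B := by
            rw [← hstabB _ hs]; exact Set.mem_smul_set.2 ⟨b, hbB, rfl⟩
          have key : (y⁻¹ : G) * ((x⁻¹ * y) * b) = x⁻¹ * b := by
            rw [mul_comm x⁻¹ y, mul_assoc y x⁻¹ b, inv_mul_cancel_left]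
          obtain ⟨hfa, -⟩ := SH16.fact_inj hKB
            (a₁ := ⟨y⁻¹, Set.mem_inv.2 (by simpa using hyK)⟩)
            (a₂ := ⟨x⁻¹, Set.mem_inv.2 (by simpa using hx)⟩)
            (b₁ := ⟨(x⁻¹ * y) * b, hsb⟩) (b₂ := ⟨b, hbB⟩) key
          have : (y⁻¹ : G) = x⁻¹ := congrArg Subtype.val hfa
          exact inv_injective this
        · rintro rfl
          exact ⟨hx, (QuotientGroup.leftRel H).iseqv.refl _⟩
      · have hfq : IsFactorization (QuotientGroup.mk '' K⁻¹ : Set (G ⧸ H))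
            (QuotientGroup.mk '' B) := SH16.fact_quotient H hKB hstabB
        have hkal : IsKaleidoscopical (QuotientGroup.mk '' K : Set (G ⧸ H)) := by
          have := SH16.compl_to_kal hfq
          rwa [← SH16.image_mk_inv, inv_inv] at this
        obtain ⟨C, χ, hχs, hχb⟩ := hkal
        refine ⟨C, χ, hχs, ?_⟩
        intro g
        have hb := hχb (QuotientGroup.mk g)
        rw [← SH16.image_mk_smul] at hb
        exact hb
  · -- space property implies group property
    intro hS A hAu hex
    obtain ⟨B, hAB⟩ := hex
    have hKal : IsKaleidoscopical A⁻¹ := SH16.compl_to_kal hAB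
    obtain ⟨E, hEbot, hEinv, hEpo, C, χ, hχs, hχb⟩ := hS A⁻¹ (SH16.inv_ne_univ hAu) hKal
    -- the class of the identity is a subgroup
    let H : Subgroup G :=
      { carrier := {x | E.r 1 x}
        one_mem' := E.refl 1
        mul_mem' := by
          intro a b ha hb
          have h2 : E.r a (a * b) := by simpa using hEinv a 1 b hb
          exact E.trans ha h2
        inv_mem' := by
          intro a ha
          have h2 : E.r a⁻¹ 1 := by simpa using hEinv a⁻¹ 1 a ha
          exact E.symm h2 }
    have hEH : ∀ x y : G, E.r x y ↔ x⁻¹ * y ∈ H := by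
      intro x y
      constructor
      · intro hr
        have h2 := hEinv x⁻¹ x y hr
        show E.r 1 (x⁻¹ * y); simpa using h2
      · intro hm
        have h2 : E.r 1 (x⁻¹ * y) := hm
        have h3 := hEinv x 1 (x⁻¹ * y) h2
        simpa using h3
    -- a nontrivial element of H
    obtain ⟨x₀, y₀, hr₀, hne₀⟩ : ∃ x y : G, E.r x y ∧ x ≠ y := by
      by_contra hc
      push_neg at hc
      apply hEbot
      apply Setoid.ext
      intro a b
      exact ⟨fun hab => hc a b hab, fun hab => hab ▸ E.refl a⟩
    have hh0 : x₀⁻¹ * y₀ ∈ H := (hEH x₀ y₀).1 hr₀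
    have hh0ne : x₀⁻¹ * y₀ ≠ 1 := fun hcon => hne₀ (inv_mul_eq_one.1 hcon)
    set h0 := x₀⁻¹ * y₀ with hh0def
    rcases hEpo with hEpar | hEorth
    · -- parallel : A itself is periodic
      left
      have hK : ∀ s ∈ H, ∀ x ∈ A⁻¹, s * x ∈ A⁻¹ := by
        intro s hs x hx
        have hsub : {y | E.r x y} ⊆ A⁻¹ := by
          rw [← hEpar x hx]; exact Set.inter_subset_left
        refine hsub ?_
        refine (hEH x (s * x)).2 ?_
        rwa [mul_comm s x, inv_mul_cancel_left]
      have hKeq : h0 • (A⁻¹ : Set G) = A⁻¹ := by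
        apply Set.eq_of_subset_of_subset
        · rintro z ⟨x, hx, rfl⟩
          exact hK h0 hh0 x hx
        · intro z hz
          refine ⟨h0⁻¹ * z, hK h0⁻¹ (inv_mem hh0) z hz, ?_⟩
          show h0 • (h0⁻¹ * z) = z
          rw [smul_eq_mul, mul_inv_cancel_left]
      refine ⟨h0⁻¹, inv_ne_one.2 hh0ne, ?_⟩
      have h1 : ((h0 • (A⁻¹ : Set G))⁻¹ : Set G) = (A⁻¹)⁻¹ := congrArg Inv.inv hKeq
      rw [SH16.smul_set_inv'] at h1
      simpa only [inv_inv] using h1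
    · -- orthogonal : build a periodic complementer factor
      right
      have hEq : E = QuotientGroup.leftRel H :=
        Setoid.ext fun x y => (hEH x y).trans QuotientGroup.leftRel_apply.symm
      -- transport the coloring to G ⧸ H
      let eH : G ⧸ H → Quotient E := fun q =>
        Quotient.liftOn' q (fun x => Quotient.mk E x) (fun a b hab => by
          apply Quotient.sound
          exact (hEH a b).2 (QuotientGroup.leftRel_apply.1 hab))
      have heH : ∀ x : G, eH (QuotientGroup.mk x) = Quotient.mk E x := fun x => rfl
      have hkalQ : IsKaleidoscopical (QuotientGroup.mk '' A⁻¹ : Set (G ⧸ H)) := by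
        refine ⟨C, fun q => χ (eH q), ?_, ?_⟩
        · intro c
          obtain ⟨q, hq⟩ := hχs c
          obtain ⟨x, rfl⟩ := Quotient.exists_rep q
          exact ⟨QuotientGroup.mk x, hq⟩
        · intro qg
          obtain ⟨g, rfl⟩ := QuotientGroup.mk_surjective qg
          rw [← SH16.image_mk_smul]
          refine ⟨fun x _ => Set.mem_univ _, ?_, ?_⟩
          · rintro p hp q hq hpq
            obtain ⟨x, hx, rfl⟩ := hp
            obtain ⟨y, hy, rfl⟩ := hq
            have hpq' : χ (Quotient.mk E x) = χ (Quotient.mk E y) := hpq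
            replace hpq := hpq'
            have hmem₁ : Quotient.mk E x ∈ Quotient.mk E '' (g • A⁻¹) := ⟨x, hx, rfl⟩
            have hmem₂ : Quotient.mk E y ∈ Quotient.mk E '' (g • A⁻¹) := ⟨y, hy, rfl⟩
            have := (hχb g).2.1 hmem₁ hmem₂ hpq
            have hrel : E.r x y := Quotient.exact this
            exact QuotientGroup.eq.2 ((hEH x y).1 hrel)
          · intro c _
            obtain ⟨z, hz, hcz⟩ := (hχb g).2.2 (Set.mem_univ c)
            obtain ⟨x, hx, rfl⟩ := hz
            refine ⟨QuotientGroup.mk x, ⟨x, hx, rfl⟩, ?_⟩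
            show χ (eH (QuotientGroup.mk x)) = c
            rw [heH]; exact hcz
      obtain ⟨Bq, hBq⟩ := SH16.kal_to_compl hkalQ
      have hAQ : ((QuotientGroup.mk '' A⁻¹ : Set (G ⧸ H))⁻¹ : Set (G ⧸ H))
          = QuotientGroup.mk '' A := by
        rw [← SH16.image_mk_inv, inv_inv]
      rw [hAQ] at hBq
      -- the lifted complement
      refine ⟨QuotientGroup.mk ⁻¹' Bq, ⟨?_, ?_⟩, ?_⟩
      · -- injectivity
        rintro ⟨⟨a₁, ha₁⟩, ⟨b₁, hb₁⟩⟩ ⟨⟨a₂, ha₂⟩, ⟨b₂, hb₂⟩⟩ heq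
        simp only at heq
        have heqq : (QuotientGroup.mk a₁ : G ⧸ H) * QuotientGroup.mk b₁
            = QuotientGroup.mk a₂ * QuotientGroup.mk b₂ := by
          rw [← QuotientGroup.mk_mul, ← QuotientGroup.mk_mul, heq]
        obtain ⟨hfa, hfb⟩ := SH16.fact_inj hBq
          (a₁ := ⟨QuotientGroup.mk a₁, a₁, ha₁, rfl⟩)
          (a₂ := ⟨QuotientGroup.mk a₂, a₂, ha₂, rfl⟩)
          (b₁ := ⟨QuotientGroup.mk b₁, hb₁⟩) (b₂ := ⟨QuotientGroup.mk b₂, hb₂⟩) heqq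
        have hma : (QuotientGroup.mk a₁ : G ⧸ H) = QuotientGroup.mk a₂ :=
          congrArg Subtype.val hfa
        have hsH : a₁⁻¹ * a₂ ∈ H := QuotientGroup.eq.1 hma
        -- orthogonality forces a₁ = a₂
        have hrel : E.r a₁⁻¹ a₂⁻¹ := by
          refine (hEH a₁⁻¹ a₂⁻¹).2 ?_
          have : (a₁⁻¹)⁻¹ * a₂⁻¹ = a₂⁻¹ * a₁ := by rw [inv_inv, mul_comm]
          rw [this]
          have := inv_mem hsH
          rwa [mul_inv_rev, inv_inv] at this
        have hmem₁ : (a₁⁻¹ : G) ∈ (A⁻¹ : Set G) := Set.mem_inv.2 (by simpa using ha₁)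
        have hmem₂ : (a₂⁻¹ : G) ∈ (A⁻¹ : Set G) := Set.mem_inv.2 (by simpa using ha₂)
        have hsingle := hEorth a₁⁻¹ hmem₁
        have : (a₂⁻¹ : G) ∈ (A⁻¹ ∩ {y | E.r a₁⁻¹ y} : Set G) := ⟨hmem₂, hrel⟩
        rw [hsingle] at this
        have haa : a₁ = a₂ := inv_injective (this.symm)
        subst haa
        have hbb : b₁ = b₂ := mul_left_cancel heq
        subst hbb
        rfl
      · -- surjectivity
        intro g
        obtain ⟨⟨xq, yq⟩, hxy⟩ := hBq.2 (QuotientGroup.mk g)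
        obtain ⟨a, haA, hamk⟩ := xq.2
        have hxy' : (QuotientGroup.mk a : G ⧸ H) * (yq : G ⧸ H) = QuotientGroup.mk g := by
          rw [hamk]; exact hxy
        have hy : (yq : G ⧸ H) = QuotientGroup.mk (a⁻¹ * g) := by
          rw [QuotientGroup.mk_mul, QuotientGroup.mk_inv, ← hxy', inv_mul_cancel_left]
        have hbB : a⁻¹ * g ∈ QuotientGroup.mk ⁻¹' Bq := by
          have := yq.2
          rw [hy] at this
          exact this
        refine ⟨(⟨a, haA⟩, ⟨a⁻¹ * g, hbB⟩), ?_⟩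
        show a * (a⁻¹ * g) = g
        rw [mul_inv_cancel_left]
      · -- periodicity of the lifted complement
        refine ⟨h0, hh0ne, ?_⟩
        have hmk0 : (QuotientGroup.mk h0 : G ⧸ H) = 1 := (QuotientGroup.eq_one_iff h0).2 hh0
        ext z
        constructor
        · rintro ⟨b, hb, rfl⟩
          simp only [smul_eq_mul, Set.mem_preimage] at *
          rw [QuotientGroup.mk_mul, hmk0, one_mul]
          exact hb
        · intro hz
          refine ⟨h0⁻¹ * z, ?_, by show h0 • (h0⁻¹ * z) = z; rw [smul_eq_mul, mul_inv_cancel_left]⟩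
          simp only [Set.mem_preimage] at *
          rw [QuotientGroup.mk_mul, QuotientGroup.mk_inv, hmk0, inv_one, one_mul]
          exact hz
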